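/- Let H be a finite set of hypotheses, p = (p_h)_{h∈H} a family of independent [0,1]-valued random variables with P(p_h ≤ t) ≤ t for all t ∈ [0,1] and all h ∈ H₀. Let R(p) be a multiple testing procedure such that |R(p)| (the Λ-volume of the rejection set) is nonincreasing in each coordinate p_h with h ∈ H₀. Then for every h ∈ H₀ and every c > 0, E[ 1_{p_h ≤ c |R(p)|} / |R(p)| ] ≤ c. -/

import Mathlib

open MeasureTheory ProbabilityTheory ENNReal Set Finset

/-- One-dimensional key lemma: if `ν` is a probability measure on `ℝ` that is
stochastically lower bounded by the uniform distribution on `[0,1]`, concentrated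
on `[0,1]`, and `g` is nonincreasing, then
`∫ 1_{t ≤ c g(t), g(t) > 0} / g(t) dν(t) ≤ c`. -/
theorem key_inner_lemma (ν : Measure ℝ) [IsProbabilityMeasure ν]
    (hν : ∀ t : ℝ, 0 ≤ t → t ≤ 1 → ν (Set.Iic t) ≤ ENNReal.ofReal t)
    (hsupp : ν (Set.Icc (0:ℝ) 1)ᶜ = 0)
    (g : ℝ → ℝ) (hg : Antitone g) (c : ℝ) (hc : 0 < c) :
    ∫⁻ t in {t | t ≤ c * g t ∧ 0 < g t}, ENNReal.ofReal (g t)⁻¹ ∂ν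
      ≤ ENNReal.ofReal c := by
  have hν0 : ν (Set.Iic (0:ℝ)) = 0 := by
    have := hν 0 le_rfl zero_le_one
    simpa using this
  set S : Set ℝ := {t | t ≤ c * g t ∧ 0 < g t} with hS
  set A : Set ℝ := S ∩ Set.Ioc 0 1 with hA
  -- S and A agree ν-a.e.
  have hSA : S =ᵐ[ν] A := by
    rw [MeasureTheory.ae_eq_set]
    constructor
    · refine measure_mono_null ?_ (measure_union_null hν0 hsupp)
      intro t ht
      rcases ht with ⟨htS, htA⟩
      by_cases h0 : t ≤ 0
      · exact Or.inl h0
      · push_neg at h0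
        by_cases h1 : t ≤ 1
        · exact absurd ⟨htS, h0, h1⟩ htA
        · exact Or.inr (fun hmem => h1 hmem.2)
    · have : A \ S = ∅ := by
        ext t; simp only [Set.mem_diff, Set.mem_empty_iff_false, iff_false]
        rintro ⟨⟨ht, _⟩, hns⟩; exact hns ht
      simp [this]
  rw [setLIntegral_congr hSA]
  rcases Set.eq_empty_or_nonempty A with hAe | ⟨t0, ht0⟩
  · simp [hAe]
  · -- A nonempty; let t* = sSup A
    have hbdd : BddAbove A := ⟨1, fun s hs => hs.2.2⟩
    set ts : ℝ := sSup A with hts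
    have ht0A := ht0
    have ht0pos : 0 < t0 := ht0.2.1
    have htspos : 0 < ts := lt_of_lt_of_le ht0pos (le_csSup hbdd ht0)
    have hts1 : ts ≤ 1 := csSup_le ⟨t0, ht0⟩ fun s hs => hs.2.2
    -- key: for t ∈ A, ts ≤ c * g t
    have hkey : ∀ t ∈ A, ts ≤ c * g t := by
      intro t ht
      apply csSup_le ⟨t0, ht0⟩
      intro s hs
      rcases le_total s t with hst | hts'
      · exact hst.trans ht.1.1
      · calc s ≤ c * g s := hs.1.1
          _ ≤ c * g t := mul_le_mul_of_nonneg_left (hg hts') hc.le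
    -- bound the integrand on A
    have hbound : ∀ t ∈ A, ENNReal.ofReal (g t)⁻¹ ≤ ENNReal.ofReal (c / ts) := by
      intro t ht
      apply ENNReal.ofReal_le_ofReal
      have hgt : 0 < g t := ht.1.2
      have h1 : ts / c ≤ g t := (div_le_iff₀' hc).2 (hkey t ht)
      have h2 : 0 < ts / c := div_pos htspos hc
      calc (g t)⁻¹ ≤ (ts / c)⁻¹ := by
            apply inv_anti₀ h2 h1
        _ = c / ts := by rw [inv_div]
    calc ∫⁻ t in A, ENNReal.ofReal (g t)⁻¹ ∂ν
        ≤ ∫⁻ _ in A, ENNReal.ofReal (c / ts) ∂ν :=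
          setLIntegral_mono measurable_const hbound
      _ = ENNReal.ofReal (c / ts) * ν A := setLIntegral_const _ _
      _ ≤ ENNReal.ofReal (c / ts) * ENNReal.ofReal ts := by
          apply mul_le_mul_right
          calc ν A ≤ ν (Set.Iic ts) := by
                apply measure_mono
                intro s hs
                exact le_csSup hbdd hs
            _ ≤ ENNReal.ofReal ts := hν ts htspos.le hts1
      _ = ENNReal.ofReal (c / ts * ts) := by
          rw [← ENNReal.ofReal_mul (by positivity)]
      _ = ENNReal.ofReal c := by
          rw [div_mul_cancel₀ _ (ne_of_gt htspos)]

/-- Proposition 3.3: under independence of the `p`-values, if `|R(p)|` is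
nonincreasing in each coordinate `p_h` with `h ∈ H₀`, then for every `h ∈ H₀`
the pair `(p_h, |R|)` satisfies the dependency control condition with linear
shape function. -/
theorem dependency_control_independent_case
    {Ω : Type*} [MeasurableSpace Ω] (P : Measure Ω) [IsProbabilityMeasure P]
    {ι : Type*} [Fintype ι] [DecidableEq ι]
    (H₀ : Finset ι) (Λ : ι → ℝ) (hΛ : ∀ h, 0 < Λ h)
    (p : ι → Ω → ℝ) (hp : ∀ h, Measurable (p h))
    (hprange : ∀ h ω, p h ω ∈ Set.Icc (0:ℝ) 1)
    (hindep : iIndepFun p P)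
    (hUnif : ∀ h ∈ H₀, ∀ t : ℝ, 0 ≤ t → t ≤ 1 →
      P {ω | p h ω ≤ t} ≤ ENNReal.ofReal t)
    (R : (ι → ℝ) → Finset ι)
    (hRmeas : ∀ h, MeasurableSet {x : ι → ℝ | h ∈ R x})
    (hRmono : ∀ h ∈ H₀, ∀ x y : ι → ℝ, (∀ g, g ≠ h → x g = y g) → x h ≤ y h →
      (∑ g ∈ R y, Λ g) ≤ ∑ g ∈ R x, Λ g)
    (h : ι) (hh : h ∈ H₀) (c : ℝ) (hc : 0 < c) :
    ∫⁻ ω in {ω | p h ω ≤ c * (∑ g ∈ R (fun i => p i ω), Λ g)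
        ∧ 0 < ∑ g ∈ R (fun i => p i ω), Λ g},
      ENNReal.ofReal (∑ g ∈ R (fun i => p i ω), Λ g)⁻¹ ∂P
      ≤ ENNReal.ofReal c := by
  classical
  -- the volume function
  set V : (ι → ℝ) → ℝ := fun x => ∑ g ∈ R x, Λ g with hV
  have hVmeas : Measurable V := by
    have : V = fun x => ∑ g : ι, if g ∈ R x then Λ g else 0 := by
      funext x
      rw [hV]
      simp only
      rw [Finset.sum_ite_mem, Finset.univ_inter]
    rw [this]
    exact Finset.measurable_sum _ fun g _ =>
      Measurable.ite (hRmeas g) measurable_const measurable_const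
  -- the integrand as a function on the product space
  set T : Set (ι → ℝ) := {x | x h ≤ c * V x ∧ 0 < V x} with hT
  have hTmeas : MeasurableSet T := by
    apply MeasurableSet.inter
    · exact measurableSet_le (measurable_pi_apply h) (hVmeas.const_mul c)
    · exact measurableSet_lt measurable_const hVmeas
  set G : (ι → ℝ) → ℝ≥0∞ := T.indicator (fun x => ENNReal.ofReal (V x)⁻¹) with hG
  have hGmeas : Measurable G :=
    (Measurable.ennreal_ofReal hVmeas.inv).indicator hTmeas
  -- the joint map
  set J : Ω → (ι → ℝ) := fun ω i => p i ω with hJ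
  have hJmeas : Measurable J := measurable_pi_lambda _ hp
  -- marginal laws
  set μ : ι → Measure ℝ := fun i => P.map (p i) with hμ
  have hμprob : ∀ i, IsProbabilityMeasure (μ i) := fun i =>
    Measure.isProbabilityMeasure_map (hp i).aemeasurable
  haveI := hμprob
  -- independence: joint law is the product measure
  have hmap : Measure.pi μ = P.map J := by
    apply Measure.pi_eq
    intro s hs
    rw [Measure.map_apply hJmeas (MeasurableSet.univ_pi hs)]
    have hpre : J ⁻¹' (Set.univ.pi s) = ⋂ i ∈ Finset.univ, p i ⁻¹' s i := by
      ext ω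
      simp [hJ, Set.mem_pi]
    rw [hpre, hindep.measure_inter_preimage_eq_mul Finset.univ (fun i _ => hs i)]
    apply Finset.prod_congr rfl
    intro i _
    rw [hμ]
    simp only
    rw [Measure.map_apply (hp i) (hs i)]
  -- rewrite LHS as an integral over the product measure
  have hLHS : ∫⁻ ω in {ω | p h ω ≤ c * (∑ g ∈ R (fun i => p i ω), Λ g)
        ∧ 0 < ∑ g ∈ R (fun i => p i ω), Λ g},
      ENNReal.ofReal (∑ g ∈ R (fun i => p i ω), Λ g)⁻¹ ∂P
      = ∫⁻ x, G x ∂(Measure.pi μ) := by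
    rw [hmap, lintegral_map hGmeas hJmeas]
    have hset : {ω | p h ω ≤ c * (∑ g ∈ R (fun i => p i ω), Λ g)
        ∧ 0 < ∑ g ∈ R (fun i => p i ω), Λ g} = J ⁻¹' T := by
      ext ω; simp [hT, hJ, hV]
    rw [hset, ← lintegral_indicator (hJmeas hTmeas)]
    congr 1
  rw [hLHS]
  -- Fubini step: bound the marginal over coordinate h
  have hstep : ∫⁻ x, G x ∂(Measure.pi μ) ≤ ∫⁻ _, ENNReal.ofReal c ∂(Measure.pi μ) := by
    apply lintegral_le_of_lmarginal_le {h} hGmeas measurable_const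
    rw [lmarginal_singleton, lmarginal_singleton]
    intro x
    simp only
    -- the inner integral for fixed other coordinates
    set gx : ℝ → ℝ := fun t => V (Function.update x h t) with hgx
    have hgxmeas : Measurable gx := hVmeas.comp (measurable_update x)
    have hgxanti : Antitone gx := by
      intro t s hts
      exact hRmono h hh (Function.update x h t) (Function.update x h s)
        (fun g hg => by simp [Function.update_of_ne hg]) (by simpa using hts)
    have hinner : ∫⁻ t, G (Function.update x h t) ∂μ h
        = ∫⁻ t in {t | t ≤ c * gx t ∧ 0 < gx t}, ENNReal.ofReal (gx t)⁻¹ ∂μ h := by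
      have hset : (fun t => Function.update x h t) ⁻¹' T
          = {t | t ≤ c * gx t ∧ 0 < gx t} := by
        ext t
        simp only [Set.mem_preimage, hT, Set.mem_setOf_eq, hgx]
        rw [Function.update_self]
      rw [← hset, ← lintegral_indicator ((measurable_update x) hTmeas)]
      congr 1
    rw [hinner]
    have hνbound : ∀ t : ℝ, 0 ≤ t → t ≤ 1 → μ h (Set.Iic t) ≤ ENNReal.ofReal t := by
      intro t ht0 ht1
      rw [hμ]
      simp only
      rw [Measure.map_apply (hp h) measurableSet_Iic]
      exact hUnif h hh t ht0 ht1
    have hνsupp : μ h (Set.Icc (0:ℝ) 1)ᶜ = 0 := by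
      rw [hμ]
      simp only
      rw [Measure.map_apply (hp h) measurableSet_Icc.compl]
      have : p h ⁻¹' (Set.Icc (0:ℝ) 1)ᶜ = ∅ := by
        ext ω
        simp only [Set.mem_preimage, Set.mem_compl_iff, Set.mem_empty_iff_false, iff_false,
          not_not]
        exact hprange h ω
      rw [this]; simp
    calc ∫⁻ t in {t | t ≤ c * gx t ∧ 0 < gx t}, ENNReal.ofReal (gx t)⁻¹ ∂μ h
        ≤ ENNReal.ofReal c := key_inner_lemma (μ h) hνbound hνsupp gx hgxanti c hc
      _ ≤ ∫⁻ _, ENNReal.ofReal c ∂μ h := by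
          rw [lintegral_const, measure_univ, mul_one]
  refine hstep.trans ?_
  rw [lintegral_const, measure_univ, mul_one]
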